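/- Let L ⊆ (V×ℝʰ)⊕(V*×ℝʰ) be maximally isotropic for the neutral pairing G, and let V₁,…,V_k ∈ V. Then L̂ = {(X − w·𝐕, u, α(𝐕)) ⊕ (α, v, w) : (X,u)⊕(α,v) ∈ L, w ∈ ℝᵏ} (where w·𝐕 = Σ_p wᵖ V_p and α(𝐕) = (α(V_p)) ∈ ℝᵏ) is a maximally isotropic subspace of (V×ℝʰ⁺ᵏ)⊕(V*×ℝʰ⁺ᵏ). -/
import Mathlib


open scoped BigOperators

/-- The neutral pairing on the stable big space of index `h`. -/
noncomputable def stablePairing (V : Type*) [AddCommGroup V] [Module ℝ V] (h : ℕ)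
    (p q : (V × (Fin h → ℝ)) × (Module.Dual ℝ V × (Fin h → ℝ))) : ℝ :=
  (1 / 2) * (q.2.1 p.1.1 + p.2.1 q.1.1 +
    ∑ a, p.1.2 a * q.2.2 a + ∑ a, q.1.2 a * p.2.2 a)

/-- The neutral pairing on the stable big space of index `h + k`, with
`ℝ^{h+k}` modelled by `(Fin h → ℝ) × (Fin k → ℝ)`. -/
noncomputable def stablePairing2 (V : Type*) [AddCommGroup V] [Module ℝ V]
    (h k : ℕ)
    (p q : (V × ((Fin h → ℝ) × (Fin k → ℝ))) ×
      (Module.Dual ℝ V × ((Fin h → ℝ) × (Fin k → ℝ)))) : ℝ :=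
  (1 / 2) * (q.2.1 p.1.1 + p.2.1 q.1.1 +
    (∑ a, p.1.2.1 a * q.2.2.1 a + ∑ b, p.1.2.2 b * q.2.2.2 b) +
    (∑ a, q.1.2.1 a * p.2.2.1 a + ∑ b, q.1.2.2 b * p.2.2.2 b))

/-- The prolongation map as a linear map. -/
noncomputable def prolongMap (V : Type*) [AddCommGroup V] [Module ℝ V]
    (h k : ℕ) (Vv : Fin k → V) :
    (((V × (Fin h → ℝ)) × (Module.Dual ℝ V × (Fin h → ℝ))) × (Fin k → ℝ)) →ₗ[ℝ]
    ((V × ((Fin h → ℝ) × (Fin k → ℝ))) ×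
      (Module.Dual ℝ V × ((Fin h → ℝ) × (Fin k → ℝ)))) where
  toFun pq := ((pq.1.1.1 - ∑ i, pq.2 i • Vv i, (pq.1.1.2, fun i => pq.1.2.1 (Vv i))),
    (pq.1.2.1, (pq.1.2.2, pq.2)))
  map_add' x y := by
    ext <;> simp [Finset.sum_add_distrib, add_smul] <;> abel
  map_smul' r x := by
    ext <;> simp [Finset.smul_sum, smul_smul, smul_sub]


/-- A product of submodules is linearly equivalent to the product of the
corresponding subtypes. -/
def subProdEquiv {R M N : Type*} [Semiring R] [AddCommMonoid M] [AddCommMonoid N]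
    [Module R M] [Module R N] (p : Submodule R M) (q : Submodule R N) :
    (p.prod q) ≃ₗ[R] p × q where
  toFun x := (⟨x.1.1, x.2.1⟩, ⟨x.1.2, x.2.2⟩)
  invFun x := ⟨(x.1.1, x.2.1), ⟨x.1.2, x.2.2⟩⟩
  map_add' x y := rfl
  map_smul' r x := rfl
  left_inv x := rfl
  right_inv x := rfl

/-- Pointwise (algebraic) content of the prolongation theorem for Dirac
structures: if `L` is maximally isotropic of index `h` and `V₁,…,V_k ∈ V`,
then `L̂ = {(X − w·𝐕, u, α(𝐕)) ⊕ (α,v,w)}` is maximally isotropic of index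
`h + k`. -/
theorem stmt15 (V : Type*) [AddCommGroup V] [Module ℝ V] [FiniteDimensional ℝ V]
    (h k : ℕ) (Vv : Fin k → V)
    (L : Submodule ℝ ((V × (Fin h → ℝ)) × (Module.Dual ℝ V × (Fin h → ℝ))))
    (hLiso : ∀ p ∈ L, ∀ q ∈ L, stablePairing V h p q = 0)
    (hLrk : Module.finrank ℝ L = Module.finrank ℝ V + h)
    (Lhat : Submodule ℝ ((V × ((Fin h → ℝ) × (Fin k → ℝ))) ×
      (Module.Dual ℝ V × ((Fin h → ℝ) × (Fin k → ℝ)))))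
    (hLhat : ∀ p, p ∈ Lhat ↔ ∃ (X : V) (u : Fin h → ℝ)
      (α : Module.Dual ℝ V) (v : Fin h → ℝ) (w : Fin k → ℝ),
        ((X, u), (α, v)) ∈ L ∧
        p = ((X - ∑ i, w i • Vv i, (u, fun i => α (Vv i))), (α, (v, w)))) :
    (∀ p ∈ Lhat, ∀ q ∈ Lhat, stablePairing2 V h k p q = 0) ∧
    Module.finrank ℝ Lhat = Module.finrank ℝ V + (h + k) := by
  constructor
  · intro p hp q hq
    obtain ⟨X, u, α, v, w, hmem, rfl⟩ := (hLhat p).1 hp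
    obtain ⟨Y, u', β, v', w', hmem', rfl⟩ := (hLhat q).1 hq
    have h0 := hLiso _ hmem _ hmem'
    simp only [stablePairing] at h0
    simp only [stablePairing2, map_sub, map_sum, map_smul, smul_eq_mul]
    have hc1 : ∑ b, α (Vv b) * w' b = ∑ b, w' b * α (Vv b) :=
      Finset.sum_congr rfl fun b _ => mul_comm _ _
    have hc2 : ∑ b, β (Vv b) * w b = ∑ b, w b * β (Vv b) :=
      Finset.sum_congr rfl fun b _ => mul_comm _ _
    linear_combination h0 + (1/2) * hc1 + (1/2) * hc2
  · have hinj : Function.Injective (prolongMap V h k Vv) := by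
      intro x y hxy
      have h1 := congrArg (fun z => z.2.1) hxy
      have h2 := congrArg (fun z => z.2.2.1) hxy
      have h3 := congrArg (fun z => z.2.2.2) hxy
      have h4 := congrArg (fun z => z.1.2.1) hxy
      have h5 := congrArg (fun z => z.1.1) hxy
      simp only [prolongMap, LinearMap.coe_mk, AddHom.coe_mk] at h1 h2 h3 h4 h5
      rcases x with ⟨⟨⟨X, u⟩, ⟨α, v⟩⟩, w⟩
      rcases y with ⟨⟨⟨Y, u'⟩, ⟨β, v'⟩⟩, w'⟩
      simp only at h1 h2 h3 h4 h5
      subst h1 h2 h4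
      subst h3
      have : X = Y := by
        have := h5
        simpa [sub_eq_sub_iff_add_eq_add] using this
      simp [this]
    have himg : Lhat = Submodule.map (prolongMap V h k Vv)
        (L.prod (⊤ : Submodule ℝ (Fin k → ℝ))) := by
      ext p
      rw [hLhat]
      constructor
      · rintro ⟨X, u, α, v, w, hmem, rfl⟩
        exact ⟨((⟨X, u⟩, ⟨α, v⟩), w), ⟨hmem, trivial⟩, rfl⟩
      · rintro ⟨⟨⟨⟨X, u⟩, ⟨α, v⟩⟩, w⟩, ⟨hmem, -⟩, rfl⟩
        exact ⟨X, u, α, v, w, hmem, rfl⟩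
    rw [himg]
    have he : Module.finrank ℝ (L.prod (⊤ : Submodule ℝ (Fin k → ℝ))) =
        Module.finrank ℝ ((L.prod (⊤ : Submodule ℝ (Fin k → ℝ))).map
          (prolongMap V h k Vv)) :=
      (Submodule.equivMapOfInjective _ hinj _).finrank_eq
    rw [← he]
    haveI : FiniteDimensional ℝ ((V × (Fin h → ℝ)) ×
        (Module.Dual ℝ V × (Fin h → ℝ))) := by infer_instance
    haveI : FiniteDimensional ℝ L := FiniteDimensional.finiteDimensional_submodule L
    haveI : Module.Free ℝ L := Module.Free.of_divisionRing ℝ L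
    have he2 : Module.finrank ℝ (L.prod (⊤ : Submodule ℝ (Fin k → ℝ))) =
        Module.finrank ℝ (L × (⊤ : Submodule ℝ (Fin k → ℝ))) :=
      (subProdEquiv L (⊤ : Submodule ℝ (Fin k → ℝ))).finrank_eq
    rw [he2, Module.finrank_prod, hLrk, finrank_top]
    simp [Module.finrank_fin_fun]
    ring
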